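/- A double functor F : 𝔸 ⟶ 𝔹 is simultaneously a double biequivalence and a double fibration if and only if it is a double trivial fibration, i.e. F is surjective on objects, full on horizontal morphisms (between objects in the image), surjective on vertical morphisms, and fully faithful on squares (with fixed boundaries in the image of F). -/
import Mathlib


universe u

/-- A (strict) double category, given explicitly: objects, horizontal morphisms,
vertical morphisms, and squares, with strictly associative and unital horizontal
and vertical compositions of morphisms and of squares, satisfying the
interchange law and the compatibilities between identity squares.
A square `α : Sq a b u v` has horizontal source `a` (top), horizontal target `b`
(bottom), vertical source `u` (left) and vertical target `v` (right). -/
structure DoubleCat : Type (u + 1) where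
  Obj : Type u
  Hor : Obj → Obj → Type u
  Ver : Obj → Obj → Type u
  Sq : ∀ {A B A' B' : Obj}, Hor A B → Hor A' B' → Ver A A' → Ver B B' → Type u
  hId : ∀ A : Obj, Hor A A
  hComp : ∀ {A B C : Obj}, Hor A B → Hor B C → Hor A C
  hId_comp : ∀ {A B : Obj} (a : Hor A B), hComp (hId A) a = a
  hComp_id : ∀ {A B : Obj} (a : Hor A B), hComp a (hId B) = a
  hComp_assoc : ∀ {A B C D : Obj} (a : Hor A B) (b : Hor B C) (c : Hor C D),
    hComp (hComp a b) c = hComp a (hComp b c)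
  vId : ∀ A : Obj, Ver A A
  vComp : ∀ {A B C : Obj}, Ver A B → Ver B C → Ver A C
  vId_comp : ∀ {A B : Obj} (u : Ver A B), vComp (vId A) u = u
  vComp_id : ∀ {A B : Obj} (u : Ver A B), vComp u (vId B) = u
  vComp_assoc : ∀ {A B C D : Obj} (u : Ver A B) (v : Ver B C) (w : Ver C D),
    vComp (vComp u v) w = vComp u (vComp v w)
  /-- the vertical identity square `e_a` on a horizontal morphism -/
  idSqV : ∀ {A B : Obj} (a : Hor A B), Sq a a (vId A) (vId B)
  /-- the horizontal identity square `id_u` on a vertical morphism -/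
  idSqH : ∀ {A A' : Obj} (u : Ver A A'), Sq (hId A) (hId A') u u
  /-- horizontal composition of squares -/
  compSqH : ∀ {A B C A' B' C' : Obj} {a : Hor A B} {b : Hor B C} {a' : Hor A' B'}
    {b' : Hor B' C'} {u : Ver A A'} {v : Ver B B'} {w : Ver C C'},
    Sq a a' u v → Sq b b' v w → Sq (hComp a b) (hComp a' b') u w
  /-- vertical composition of squares -/
  compSqV : ∀ {A B A' B' A'' B'' : Obj} {a : Hor A B} {a' : Hor A' B'}
    {a'' : Hor A'' B''} {u : Ver A A'} {v : Ver B B'} {u' : Ver A' A''}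
    {v' : Ver B' B''},
    Sq a a' u v → Sq a' a'' u' v' → Sq a a'' (vComp u u') (vComp v v')
  compSqV_id : ∀ {A B A' B' : Obj} {a : Hor A B} {a' : Hor A' B'} {u : Ver A A'}
    {v : Ver B B'} (α : Sq a a' u v), HEq (compSqV α (idSqV a')) α
  id_compSqV : ∀ {A B A' B' : Obj} {a : Hor A B} {a' : Hor A' B'} {u : Ver A A'}
    {v : Ver B B'} (α : Sq a a' u v), HEq (compSqV (idSqV a) α) α
  compSqV_assoc : ∀ {A B A' B' A'' B'' A''' B''' : Obj} {a : Hor A B}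
    {a' : Hor A' B'} {a'' : Hor A'' B''} {a''' : Hor A''' B'''}
    {u : Ver A A'} {v : Ver B B'} {u' : Ver A' A''} {v' : Ver B' B''}
    {u'' : Ver A'' A'''} {v'' : Ver B'' B'''}
    (α : Sq a a' u v) (β : Sq a' a'' u' v') (γ : Sq a'' a''' u'' v''),
    HEq (compSqV (compSqV α β) γ) (compSqV α (compSqV β γ))
  compSqH_id : ∀ {A B A' B' : Obj} {a : Hor A B} {a' : Hor A' B'} {u : Ver A A'}
    {v : Ver B B'} (α : Sq a a' u v), HEq (compSqH α (idSqH v)) α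
  id_compSqH : ∀ {A B A' B' : Obj} {a : Hor A B} {a' : Hor A' B'} {u : Ver A A'}
    {v : Ver B B'} (α : Sq a a' u v), HEq (compSqH (idSqH u) α) α
  compSqH_assoc : ∀ {A B C D A' B' C' D' : Obj} {a : Hor A B} {b : Hor B C}
    {c : Hor C D} {a' : Hor A' B'} {b' : Hor B' C'} {c' : Hor C' D'}
    {u : Ver A A'} {v : Ver B B'} {w : Ver C C'} {x : Ver D D'}
    (α : Sq a a' u v) (β : Sq b b' v w) (γ : Sq c c' w x),
    HEq (compSqH (compSqH α β) γ) (compSqH α (compSqH β γ))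
  /-- the interchange law -/
  interchange : ∀ {A B C A' B' C' A'' B'' C'' : Obj}
    {a : Hor A B} {b : Hor B C} {a' : Hor A' B'} {b' : Hor B' C'}
    {a'' : Hor A'' B''} {b'' : Hor B'' C''}
    {u : Ver A A'} {v : Ver B B'} {w : Ver C C'}
    {u' : Ver A' A''} {v' : Ver B' B''} {w' : Ver C' C''}
    (α : Sq a a' u v) (β : Sq b b' v w) (γ : Sq a' a'' u' v') (δ : Sq b' b'' v' w'),
    compSqV (compSqH α β) (compSqH γ δ) = compSqH (compSqV α γ) (compSqV β δ)
  idSqV_hComp : ∀ {A B C : Obj} (a : Hor A B) (b : Hor B C),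
    compSqH (idSqV a) (idSqV b) = idSqV (hComp a b)
  idSqH_vComp : ∀ {A A' A'' : Obj} (u : Ver A A') (u' : Ver A' A''),
    compSqV (idSqH u) (idSqH u') = idSqH (vComp u u')
  idSq_coherence : ∀ A : Obj, idSqV (hId A) = idSqH (vId A)

namespace DoubleCat

variable {D : DoubleCat.{u}}

/-- Transport of a square along equalities of its four boundaries. -/
def sqCast {A B A' B' : D.Obj} {a₁ a₂ : D.Hor A B} {b₁ b₂ : D.Hor A' B'}
    {u₁ u₂ : D.Ver A A'} {v₁ v₂ : D.Ver B B'}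
    (ha : a₁ = a₂) (hb : b₁ = b₂) (hu : u₁ = u₂) (hv : v₁ = v₂)
    (α : D.Sq a₁ b₁ u₁ v₁) : D.Sq a₂ b₂ u₂ v₂ :=
  ha ▸ hb ▸ hu ▸ hv ▸ α

theorem sqCast_heq {A B A' B' : D.Obj} {a₁ a₂ : D.Hor A B} {b₁ b₂ : D.Hor A' B'}
    {u₁ u₂ : D.Ver A A'} {v₁ v₂ : D.Ver B B'}
    (ha : a₁ = a₂) (hb : b₁ = b₂) (hu : u₁ = u₂) (hv : v₁ = v₂)
    (α : D.Sq a₁ b₁ u₁ v₁) : HEq (sqCast ha hb hu hv α) α := by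
  subst ha; subst hb; subst hu; subst hv; rfl

/-- A square with identity vertical boundaries is *vertically invertible* if it
admits an inverse for the vertical composition of squares. -/
def VerticallyInvertible {A B : D.Obj} {a b : D.Hor A B}
    (α : D.Sq a b (D.vId A) (D.vId B)) : Prop :=
  ∃ β : D.Sq b a (D.vId A) (D.vId B),
    HEq (D.compSqV α β) (D.idSqV a) ∧ HEq (D.compSqV β α) (D.idSqV b)

/-- A horizontal morphism is a *horizontal equivalence* if it is an equivalence
in the underlying horizontal 2-category, i.e. it admits a pseudo-inverse up to
vertically invertible squares. -/
def IsHorEquiv {A B : D.Obj} (a : D.Hor A B) : Prop :=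
  ∃ (a' : D.Hor B A) (η : D.Sq (D.hId A) (D.hComp a a') (D.vId A) (D.vId A))
    (ε : D.Sq (D.hComp a' a) (D.hId B) (D.vId B) (D.vId B)),
    VerticallyInvertible η ∧ VerticallyInvertible ε

/-- Horizontal adjoint equivalence data on a horizontal morphism `a : A ⟶ B`:
a pseudo-inverse `inv`, a vertically invertible unit `η : id_A ≅ inv ∘ a` and a
vertically invertible counit `ε : a ∘ inv ≅ id_B` (written diagrammatically:
`η : Sq (hId A) (a ⬝ inv)` and `ε : Sq (inv ⬝ a) (hId B)`), satisfying the two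
triangle identities. -/
structure HorAdjEquiv {A B : D.Obj} (a : D.Hor A B) : Type u where
  inv : D.Hor B A
  η : D.Sq (D.hId A) (D.hComp a inv) (D.vId A) (D.vId A)
  ε : D.Sq (D.hComp inv a) (D.hId B) (D.vId B) (D.vId B)
  η_invertible : VerticallyInvertible η
  ε_invertible : VerticallyInvertible ε
  triangle₁ : HEq
    (D.compSqV (D.compSqH η (D.idSqV a))
      (sqCast (D.hComp_assoc a inv a).symm rfl rfl rfl
        (D.compSqH (D.idSqV a) ε)))
    (D.idSqV a)
  triangle₂ : HEq
    (D.compSqV (D.compSqH (D.idSqV inv) η)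
      (sqCast (D.hComp_assoc inv a inv) rfl rfl rfl
        (D.compSqH ε (D.idSqV inv))))
    (D.idSqV inv)

/-- The two pasting equations expressing that `β` is a *weak inverse* of the
square `α : Sq a b u v` with respect to the given (co)unit squares
`η_a : id ≅ a' ∘ a`, `η_b : id ≅ b' ∘ b`, `ε_a : a ∘ a' ≅ id`, `ε_b : b ∘ b' ≅ id`
for its horizontal boundaries: `(α ∣ β)` pasted under `η_a` agrees with `η_b`
pasted under `id_u`, and `ε_a` pasted over `id_v` agrees with `(β ∣ α)` pasted
over `ε_b`. -/
def IsWeakInverseWith {A B A' B' : D.Obj} {a : D.Hor A B} {b : D.Hor A' B'}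
    {u : D.Ver A A'} {v : D.Ver B B'} (α : D.Sq a b u v)
    {a' : D.Hor B A} {b' : D.Hor B' A'}
    (η_a : D.Sq (D.hId A) (D.hComp a a') (D.vId A) (D.vId A))
    (η_b : D.Sq (D.hId A') (D.hComp b b') (D.vId A') (D.vId A'))
    (ε_a : D.Sq (D.hComp a' a) (D.hId B) (D.vId B) (D.vId B))
    (ε_b : D.Sq (D.hComp b' b) (D.hId B') (D.vId B') (D.vId B'))
    (β : D.Sq a' b' v u) : Prop :=
  HEq (D.compSqV η_a (D.compSqH α β)) (D.compSqV (D.idSqH u) η_b) ∧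
  HEq (D.compSqV ε_a (D.idSqH v)) (D.compSqV (D.compSqH β α) ε_b)

/-- A square is *weakly horizontally invertible* if it is an equivalence in the
2-category of vertical morphisms and squares: there are a square `β` in the
opposite horizontal direction and vertically invertible unit and counit squares
for the horizontal boundaries making `β` a weak inverse of `α`. -/
def WeaklyHorInvertible {A B A' B' : D.Obj} {a : D.Hor A B} {b : D.Hor A' B'}
    {u : D.Ver A A'} {v : D.Ver B B'} (α : D.Sq a b u v) : Prop :=
  ∃ (a' : D.Hor B A) (b' : D.Hor B' A')
    (η_a : D.Sq (D.hId A) (D.hComp a a') (D.vId A) (D.vId A))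
    (η_b : D.Sq (D.hId A') (D.hComp b b') (D.vId A') (D.vId A'))
    (ε_a : D.Sq (D.hComp a' a) (D.hId B) (D.vId B) (D.vId B))
    (ε_b : D.Sq (D.hComp b' b) (D.hId B') (D.vId B') (D.vId B'))
    (β : D.Sq a' b' v u),
    VerticallyInvertible η_a ∧ VerticallyInvertible η_b ∧
    VerticallyInvertible ε_a ∧ VerticallyInvertible ε_b ∧
    IsWeakInverseWith α η_a η_b ε_a ε_b β

end DoubleCat

namespace DoubleCat

/-- A (strict) double functor between double categories: maps on objects,
horizontal morphisms, vertical morphisms and squares, strictly preserving all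
identities and compositions. -/
structure DoubleFunctor (C D : DoubleCat.{u}) : Type u where
  obj : C.Obj → D.Obj
  hor : ∀ {A B : C.Obj}, C.Hor A B → D.Hor (obj A) (obj B)
  ver : ∀ {A B : C.Obj}, C.Ver A B → D.Ver (obj A) (obj B)
  sq : ∀ {A B A' B' : C.Obj} {a : C.Hor A B} {b : C.Hor A' B'} {u : C.Ver A A'}
    {v : C.Ver B B'}, C.Sq a b u v → D.Sq (hor a) (hor b) (ver u) (ver v)
  hor_id : ∀ A : C.Obj, hor (C.hId A) = D.hId (obj A)
  hor_comp : ∀ {A B E : C.Obj} (a : C.Hor A B) (b : C.Hor B E),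
    hor (C.hComp a b) = D.hComp (hor a) (hor b)
  ver_id : ∀ A : C.Obj, ver (C.vId A) = D.vId (obj A)
  ver_comp : ∀ {A B E : C.Obj} (u : C.Ver A B) (v : C.Ver B E),
    ver (C.vComp u v) = D.vComp (ver u) (ver v)
  sq_idV : ∀ {A B : C.Obj} (a : C.Hor A B), HEq (sq (C.idSqV a)) (D.idSqV (hor a))
  sq_idH : ∀ {A A' : C.Obj} (u : C.Ver A A'), HEq (sq (C.idSqH u)) (D.idSqH (ver u))
  sq_compH : ∀ {A B E A' B' E' : C.Obj} {a : C.Hor A B} {b : C.Hor B E}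
    {a' : C.Hor A' B'} {b' : C.Hor B' E'} {u : C.Ver A A'} {v : C.Ver B B'}
    {w : C.Ver E E'} (α : C.Sq a a' u v) (β : C.Sq b b' v w),
    HEq (sq (C.compSqH α β)) (D.compSqH (sq α) (sq β))
  sq_compV : ∀ {A B A' B' A'' B'' : C.Obj} {a : C.Hor A B} {a' : C.Hor A' B'}
    {a'' : C.Hor A'' B''} {u : C.Ver A A'} {v : C.Ver B B'} {u' : C.Ver A' A''}
    {v' : C.Ver B' B''} (α : C.Sq a a' u v) (β : C.Sq a' a'' u' v'),
    HEq (sq (C.compSqV α β)) (D.compSqV (sq α) (sq β))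

/-- A double functor maps heterogeneously equal squares (over equal boundaries)
to heterogeneously equal squares. -/
theorem DoubleFunctor.sq_congr {C D : DoubleCat.{u}} (G : DoubleFunctor C D)
    {A B A' B' : C.Obj} {a₁ a₂ : C.Hor A B} {b₁ b₂ : C.Hor A' B'}
    {u₁ u₂ : C.Ver A A'} {v₁ v₂ : C.Ver B B'}
    (ha : a₁ = a₂) (hb : b₁ = b₂) (hu : u₁ = u₂) (hv : v₁ = v₂)
    {α : C.Sq a₁ b₁ u₁ v₁} {β : C.Sq a₂ b₂ u₂ v₂} (h : HEq α β) :
    HEq (G.sq α) (G.sq β) := by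
  subst ha; subst hb; subst hu; subst hv; rw [eq_of_heq h]

/-- The identity double functor. -/
def DoubleFunctor.id (C : DoubleCat.{u}) : DoubleFunctor C C where
  obj A := A
  hor a := a
  ver u := u
  sq α := α
  hor_id _ := rfl
  hor_comp _ _ := rfl
  ver_id _ := rfl
  ver_comp _ _ := rfl
  sq_idV _ := HEq.rfl
  sq_idH _ := HEq.rfl
  sq_compH _ _ := HEq.rfl
  sq_compV _ _ := HEq.rfl

/-- Composition of double functors (diagrammatic order: `F` then `G`). -/
def DoubleFunctor.comp {B C D : DoubleCat.{u}} (F : DoubleFunctor B C)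
    (G : DoubleFunctor C D) : DoubleFunctor B D where
  obj A := G.obj (F.obj A)
  hor a := G.hor (F.hor a)
  ver u := G.ver (F.ver u)
  sq α := G.sq (F.sq α)
  hor_id A := by
    show G.hor (F.hor (B.hId A)) = D.hId (G.obj (F.obj A))
    rw [F.hor_id, G.hor_id]
  hor_comp a b := by
    show G.hor (F.hor (B.hComp a b)) = D.hComp (G.hor (F.hor a)) (G.hor (F.hor b))
    rw [F.hor_comp, G.hor_comp]
  ver_id A := by
    show G.ver (F.ver (B.vId A)) = D.vId (G.obj (F.obj A))
    rw [F.ver_id, G.ver_id]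
  ver_comp u v := by
    show G.ver (F.ver (B.vComp u v)) = D.vComp (G.ver (F.ver u)) (G.ver (F.ver v))
    rw [F.ver_comp, G.ver_comp]
  sq_idV a :=
    (G.sq_congr rfl rfl (F.ver_id _) (F.ver_id _) (F.sq_idV a)).trans
      (G.sq_idV (F.hor a))
  sq_idH u :=
    (G.sq_congr (F.hor_id _) (F.hor_id _) rfl rfl (F.sq_idH u)).trans
      (G.sq_idH (F.ver u))
  sq_compH α β :=
    (G.sq_congr (F.hor_comp _ _) (F.hor_comp _ _) rfl rfl (F.sq_compH α β)).trans
      (G.sq_compH (F.sq α) (F.sq β))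
  sq_compV α β :=
    (G.sq_congr rfl rfl (F.ver_comp _ _) (F.ver_comp _ _) (F.sq_compV α β)).trans
      (G.sq_compV (F.sq α) (F.sq β))

end DoubleCat

namespace DoubleCat

/-- A double functor is a **double biequivalence** if it is
(db1) surjective on objects up to horizontal equivalence,
(db2) full on horizontal morphisms up to vertically invertible square,
(db3) surjective on vertical morphisms up to weakly horizontally invertible
square, and (db4) fully faithful on squares. -/
def DoubleFunctor.IsDoubleBiequiv {C D : DoubleCat.{u}} (F : DoubleFunctor C D) :
    Prop :=
  (∀ B : D.Obj, ∃ (A : C.Obj) (e : D.Hor B (F.obj A)), IsHorEquiv e) ∧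
  (∀ (A E : C.Obj) (b : D.Hor (F.obj A) (F.obj E)),
    ∃ (a : C.Hor A E) (σ : D.Sq b (F.hor a) (D.vId (F.obj A)) (D.vId (F.obj E))),
      VerticallyInvertible σ) ∧
  (∀ (B B' : D.Obj) (v : D.Ver B B'),
    ∃ (A A' : C.Obj) (u : C.Ver A A') (e : D.Hor B (F.obj A))
      (e' : D.Hor B' (F.obj A')) (σ : D.Sq e e' v (F.ver u)),
      WeaklyHorInvertible σ) ∧
  (∀ (A E A' E' : C.Obj) (a : C.Hor A E) (c : C.Hor A' E') (u : C.Ver A A')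
    (u' : C.Ver E E') (β : D.Sq (F.hor a) (F.hor c) (F.ver u) (F.ver u')),
    ∃! α : C.Sq a c u u', F.sq α = β)

/-- A double functor is a **double fibration** if
(df1) horizontal equivalences with codomain in the image lift,
(df2) vertically invertible squares whose bottom boundary is in the image lift,
and (df3) weakly horizontally invertible squares whose right vertical boundary
is in the image lift. -/
def DoubleFunctor.IsDoubleFibration {C D : DoubleCat.{u}} (F : DoubleFunctor C D) :
    Prop :=
  (∀ (E : C.Obj) (B : D.Obj) (b : D.Hor B (F.obj E)), IsHorEquiv b →
    ∃ (A : C.Obj) (a : C.Hor A E), IsHorEquiv a ∧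
      ∃ _ : F.obj A = B, HEq (F.hor a) b) ∧
  (∀ (A E : C.Obj) (c : C.Hor A E) (b : D.Hor (F.obj A) (F.obj E))
    (β : D.Sq b (F.hor c) (D.vId (F.obj A)) (D.vId (F.obj E))),
    VerticallyInvertible β →
    ∃ (a : C.Hor A E) (α : C.Sq a c (C.vId A) (C.vId E)),
      VerticallyInvertible α ∧ F.hor a = b ∧ HEq (F.sq α) β) ∧
  (∀ (E E' : C.Obj) (u' : C.Ver E E') (B B' : D.Obj) (v : D.Ver B B')
    (e : D.Hor B (F.obj E)) (e' : D.Hor B' (F.obj E'))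
    (β : D.Sq e e' v (F.ver u')), WeaklyHorInvertible β →
    ∃ (A A' : C.Obj) (u : C.Ver A A') (f : C.Hor A E) (f' : C.Hor A' E')
      (α : C.Sq f f' u u'), WeaklyHorInvertible α ∧
      ∃ (_ : F.obj A = B) (_ : F.obj A' = B'),
        HEq (F.ver u) v ∧ HEq (F.hor f) e ∧ HEq (F.hor f') e' ∧ HEq (F.sq α) β)

/-- A double functor is a **double trivial fibration** if it is
(dt1) surjective on objects, (dt2) full on horizontal morphisms between objects
in the image, (dt3) surjective on vertical morphisms, and (dt4) fully faithful
on squares. -/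
def DoubleFunctor.IsDoubleTrivFibration {C D : DoubleCat.{u}}
    (F : DoubleFunctor C D) : Prop :=
  (∀ B : D.Obj, ∃ A : C.Obj, F.obj A = B) ∧
  (∀ (A E : C.Obj) (b : D.Hor (F.obj A) (F.obj E)),
    ∃ a : C.Hor A E, F.hor a = b) ∧
  (∀ (B B' : D.Obj) (v : D.Ver B B'),
    ∃ (A A' : C.Obj) (u : C.Ver A A') (_ : F.obj A = B) (_ : F.obj A' = B'),
      HEq (F.ver u) v) ∧
  (∀ (A E A' E' : C.Obj) (a : C.Hor A E) (c : C.Hor A' E') (u : C.Ver A A')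
    (u' : C.Ver E E') (β : D.Sq (F.hor a) (F.hor c) (F.ver u) (F.ver u')),
    ∃! α : C.Sq a c u u', F.sq α = β)

end DoubleCat

namespace DoubleCat

section Aux

variable {C D : DoubleCat.{u}}

theorem idSqH_congr {A A' : D.Obj} {u₁ u₂ : D.Ver A A'} (h : u₁ = u₂) :
    HEq (D.idSqH u₁) (D.idSqH u₂) := by subst h; rfl

theorem compSqV_congr {A B A' B' A'' B'' : D.Obj}
    {a₁ a₂ : D.Hor A B} {m₁ m₂ : D.Hor A' B'} {c₁ c₂ : D.Hor A'' B''}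
    {u₁ u₂ : D.Ver A A'} {v₁ v₂ : D.Ver B B'}
    {u'₁ u'₂ : D.Ver A' A''} {v'₁ v'₂ : D.Ver B' B''}
    (ha : a₁ = a₂) (hm : m₁ = m₂) (hc : c₁ = c₂) (hu : u₁ = u₂) (hv : v₁ = v₂)
    (hu' : u'₁ = u'₂) (hv' : v'₁ = v'₂)
    {α₁ : D.Sq a₁ m₁ u₁ v₁} {α₂ : D.Sq a₂ m₂ u₂ v₂}
    {β₁ : D.Sq m₁ c₁ u'₁ v'₁} {β₂ : D.Sq m₂ c₂ u'₂ v'₂}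
    (hα : HEq α₁ α₂) (hβ : HEq β₁ β₂) :
    HEq (D.compSqV α₁ β₁) (D.compSqV α₂ β₂) := by
  subst ha; subst hm; subst hc; subst hu; subst hv; subst hu'; subst hv'
  rw [eq_of_heq hα, eq_of_heq hβ]

theorem compSqH_congr {A B E A' B' E' : D.Obj}
    {a₁ a₂ : D.Hor A B} {b₁ b₂ : D.Hor B E} {a'₁ a'₂ : D.Hor A' B'}
    {b'₁ b'₂ : D.Hor B' E'}
    {u₁ u₂ : D.Ver A A'} {v₁ v₂ : D.Ver B B'} {w₁ w₂ : D.Ver E E'}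
    (ha : a₁ = a₂) (hb : b₁ = b₂) (ha' : a'₁ = a'₂) (hb' : b'₁ = b'₂)
    (hu : u₁ = u₂) (hv : v₁ = v₂) (hw : w₁ = w₂)
    {α₁ : D.Sq a₁ a'₁ u₁ v₁} {α₂ : D.Sq a₂ a'₂ u₂ v₂}
    {β₁ : D.Sq b₁ b'₁ v₁ w₁} {β₂ : D.Sq b₂ b'₂ v₂ w₂}
    (hα : HEq α₁ α₂) (hβ : HEq β₁ β₂) :
    HEq (D.compSqH α₁ β₁) (D.compSqH α₂ β₂) := by
  subst ha; subst hb; subst ha'; subst hb'; subst hu; subst hv; subst hw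
  rw [eq_of_heq hα, eq_of_heq hβ]

theorem vertInv_congr {A B : D.Obj} {a₁ a₂ : D.Hor A B} {b₁ b₂ : D.Hor A B}
    (ha : a₁ = a₂) (hb : b₁ = b₂)
    {α : D.Sq a₁ b₁ (D.vId A) (D.vId B)} {β : D.Sq a₂ b₂ (D.vId A) (D.vId B)}
    (h : HEq α β) : VerticallyInvertible α → VerticallyInvertible β := by
  subst ha; subst hb; rw [eq_of_heq h]; exact id

theorem vertInv_idSqV {A B : D.Obj} (a : D.Hor A B) :
    VerticallyInvertible (D.idSqV a) :=
  ⟨D.idSqV a, D.compSqV_id _, D.compSqV_id _⟩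

theorem isHorEquiv_id (A : D.Obj) : IsHorEquiv (D.hId A) :=
  ⟨D.hId A,
   sqCast rfl (D.hComp_id (D.hId A)).symm rfl rfl (D.idSqV (D.hId A)),
   sqCast (D.hComp_id (D.hId A)).symm rfl rfl rfl (D.idSqV (D.hId A)),
   vertInv_congr rfl (D.hComp_id (D.hId A)).symm
     (sqCast_heq rfl (D.hComp_id (D.hId A)).symm rfl rfl _).symm
     (vertInv_idSqV _),
   vertInv_congr (D.hComp_id (D.hId A)).symm rfl
     (sqCast_heq (D.hComp_id (D.hId A)).symm rfl rfl rfl _).symm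
     (vertInv_idSqV _)⟩

theorem weaklyHorInv_idSqH {A A' : D.Obj} (u : D.Ver A A') :
    WeaklyHorInvertible (D.idSqH u) := by
  refine ⟨D.hId A, D.hId A',
    sqCast rfl (D.hComp_id (D.hId A)).symm rfl rfl (D.idSqV (D.hId A)),
    sqCast rfl (D.hComp_id (D.hId A')).symm rfl rfl (D.idSqV (D.hId A')),
    sqCast (D.hComp_id (D.hId A)).symm rfl rfl rfl (D.idSqV (D.hId A)),
    sqCast (D.hComp_id (D.hId A')).symm rfl rfl rfl (D.idSqV (D.hId A')),
    D.idSqH u,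
    vertInv_congr rfl (D.hComp_id (D.hId A)).symm
      (sqCast_heq rfl (D.hComp_id (D.hId A)).symm rfl rfl _).symm
      (vertInv_idSqV _),
    vertInv_congr rfl (D.hComp_id (D.hId A')).symm
      (sqCast_heq rfl (D.hComp_id (D.hId A')).symm rfl rfl _).symm
      (vertInv_idSqV _),
    vertInv_congr (D.hComp_id (D.hId A)).symm rfl
      (sqCast_heq (D.hComp_id (D.hId A)).symm rfl rfl rfl _).symm
      (vertInv_idSqV _),
    vertInv_congr (D.hComp_id (D.hId A')).symm rfl
      (sqCast_heq (D.hComp_id (D.hId A')).symm rfl rfl rfl _).symm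
      (vertInv_idSqV _),
    ?_, ?_⟩
  · -- unit condition
    have hL : HEq
        (D.compSqV (sqCast rfl (D.hComp_id (D.hId A)).symm rfl rfl
          (D.idSqV (D.hId A))) (D.compSqH (D.idSqH u) (D.idSqH u)))
        (D.idSqH u) := by
      refine HEq.trans (compSqV_congr rfl (D.hComp_id (D.hId A))
        (D.hComp_id (D.hId A')) rfl rfl rfl rfl
        ((sqCast_heq rfl (D.hComp_id (D.hId A)).symm rfl rfl _).trans
          (heq_of_eq (D.idSq_coherence A)))
        (D.id_compSqH (D.idSqH u))) ?_
      rw [D.idSqH_vComp]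
      exact idSqH_congr (D.vId_comp u)
    have hR : HEq
        (D.compSqV (D.idSqH u) (sqCast rfl (D.hComp_id (D.hId A')).symm rfl rfl
          (D.idSqV (D.hId A')))) (D.idSqH u) := by
      refine HEq.trans (compSqV_congr rfl rfl (D.hComp_id (D.hId A'))
        rfl rfl rfl rfl HEq.rfl
        ((sqCast_heq rfl (D.hComp_id (D.hId A')).symm rfl rfl _).trans
          (heq_of_eq (D.idSq_coherence A')))) ?_
      rw [D.idSqH_vComp]
      exact idSqH_congr (D.vComp_id u)
    exact hL.trans hR.symm
  · -- counit condition
    have hL : HEq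
        (D.compSqV (sqCast (D.hComp_id (D.hId A)).symm rfl rfl rfl
          (D.idSqV (D.hId A))) (D.idSqH u))
        (D.idSqH u) := by
      refine HEq.trans (compSqV_congr (D.hComp_id (D.hId A)) rfl rfl
        rfl rfl rfl rfl
        ((sqCast_heq (D.hComp_id (D.hId A)).symm rfl rfl rfl _).trans
          (heq_of_eq (D.idSq_coherence A)))
        HEq.rfl) ?_
      rw [D.idSqH_vComp]
      exact idSqH_congr (D.vId_comp u)
    have hR : HEq
        (D.compSqV (D.compSqH (D.idSqH u) (D.idSqH u))
          (sqCast (D.hComp_id (D.hId A')).symm rfl rfl rfl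
            (D.idSqV (D.hId A')))) (D.idSqH u) := by
      refine HEq.trans (compSqV_congr (D.hComp_id (D.hId A))
        (D.hComp_id (D.hId A')) rfl rfl rfl rfl rfl
        (D.id_compSqH (D.idSqH u))
        ((sqCast_heq (D.hComp_id (D.hId A')).symm rfl rfl rfl _).trans
          (heq_of_eq (D.idSq_coherence A')))) ?_
      rw [D.idSqH_vComp]
      exact idSqH_congr (D.vComp_id u)
    exact hL.trans hR.symm

variable {F : DoubleFunctor C D}

theorem faithful_heq
    (h4 : ∀ (A E A' E' : C.Obj) (a : C.Hor A E) (c : C.Hor A' E')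
      (u : C.Ver A A') (u' : C.Ver E E')
      (β : D.Sq (F.hor a) (F.hor c) (F.ver u) (F.ver u')),
      ∃! α : C.Sq a c u u', F.sq α = β)
    {A E A' E' : C.Obj} {a₁ a₂ : C.Hor A E} {c₁ c₂ : C.Hor A' E'}
    {u₁ u₂ : C.Ver A A'} {w₁ w₂ : C.Ver E E'}
    (ha : a₁ = a₂) (hc : c₁ = c₂) (hu : u₁ = u₂) (hw : w₁ = w₂)
    {α₁ : C.Sq a₁ c₁ u₁ w₁} {α₂ : C.Sq a₂ c₂ u₂ w₂}
    (h : HEq (F.sq α₁) (F.sq α₂)) : HEq α₁ α₂ := by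
  subst ha; subst hc; subst hu; subst hw
  obtain ⟨α, -, huniq⟩ := h4 A E A' E' a₁ c₁ u₁ w₁ (F.sq α₂)
  rw [huniq α₁ (eq_of_heq h), huniq α₂ rfl]

theorem reflect_vertInv
    (h4 : ∀ (A E A' E' : C.Obj) (a : C.Hor A E) (c : C.Hor A' E')
      (u : C.Ver A A') (u' : C.Ver E E')
      (β : D.Sq (F.hor a) (F.hor c) (F.ver u) (F.ver u')),
      ∃! α : C.Sq a c u u', F.sq α = β)
    {A E : C.Obj} {a c : C.Hor A E} (α : C.Sq a c (C.vId A) (C.vId E))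
    {p q : D.Hor (F.obj A) (F.obj E)}
    (hp : F.hor a = p) (hq : F.hor c = q)
    {β : D.Sq p q (D.vId (F.obj A)) (D.vId (F.obj E))}
    (hβ : HEq (F.sq α) β) (h : VerticallyInvertible β) :
    VerticallyInvertible α := by
  subst hp; subst hq
  obtain ⟨β', h₁, h₂⟩ := h
  obtain ⟨α', hα', -⟩ := h4 A E A E c a (C.vId A) (C.vId E)
    (sqCast rfl rfl (F.ver_id A).symm (F.ver_id E).symm β')
  have hFα' : HEq (F.sq α') β' := by
    have h0 := sqCast_heq rfl rfl (F.ver_id A).symm (F.ver_id E).symm β'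
    rwa [← hα'] at h0
  refine ⟨α', ?_, ?_⟩
  · refine faithful_heq h4 rfl rfl (C.vId_comp _) (C.vId_comp _) ?_
    refine ((F.sq_compV α α').trans ?_).trans (F.sq_idV a).symm
    exact (compSqV_congr rfl rfl rfl (F.ver_id A) (F.ver_id E)
      (F.ver_id A) (F.ver_id E) hβ hFα').trans h₁
  · refine faithful_heq h4 rfl rfl (C.vId_comp _) (C.vId_comp _) ?_
    refine ((F.sq_compV α' α).trans ?_).trans (F.sq_idV c).symm
    exact (compSqV_congr rfl rfl rfl (F.ver_id A) (F.ver_id E)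
      (F.ver_id A) (F.ver_id E) hFα' hβ).trans h₂

theorem reflect_horEquiv
    (h2 : ∀ (A E : C.Obj) (b : D.Hor (F.obj A) (F.obj E)),
      ∃ a : C.Hor A E, F.hor a = b)
    (h4 : ∀ (A E A' E' : C.Obj) (a : C.Hor A E) (c : C.Hor A' E')
      (u : C.Ver A A') (u' : C.Ver E E')
      (β : D.Sq (F.hor a) (F.hor c) (F.ver u) (F.ver u')),
      ∃! α : C.Sq a c u u', F.sq α = β)
    {A E : C.Obj} (a : C.Hor A E) (h : IsHorEquiv (F.hor a)) :
    IsHorEquiv a := by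
  obtain ⟨b', η, ε, hη, hε⟩ := h
  obtain ⟨g, rfl⟩ := h2 E A b'
  obtain ⟨ηC, hηC, -⟩ := h4 A A A A (C.hId A) (C.hComp a g) (C.vId A) (C.vId A)
    (sqCast (F.hor_id A).symm (F.hor_comp a g).symm (F.ver_id A).symm
      (F.ver_id A).symm η)
  obtain ⟨εC, hεC, -⟩ := h4 E E E E (C.hComp g a) (C.hId E) (C.vId E) (C.vId E)
    (sqCast (F.hor_comp g a).symm (F.hor_id E).symm (F.ver_id E).symm
      (F.ver_id E).symm ε)
  have h1 : HEq (F.sq ηC) η := by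
    have h0 := sqCast_heq (F.hor_id A).symm (F.hor_comp a g).symm
      (F.ver_id A).symm (F.ver_id A).symm η
    rwa [← hηC] at h0
  have h2' : HEq (F.sq εC) ε := by
    have h0 := sqCast_heq (F.hor_comp g a).symm (F.hor_id E).symm
      (F.ver_id E).symm (F.ver_id E).symm ε
    rwa [← hεC] at h0
  exact ⟨g, ηC, εC,
    reflect_vertInv h4 ηC (F.hor_id A) (F.hor_comp a g) h1 hη,
    reflect_vertInv h4 εC (F.hor_comp g a) (F.hor_id E) h2' hε⟩

end Aux

/-- **A double functor is simultaneously a double biequivalence and a double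
fibration if and only if it is a double trivial fibration**, i.e. surjective on
objects, full on horizontal morphisms between objects in the image, surjective
on vertical morphisms, and fully faithful on squares. -/
theorem doubleBiequiv_and_doubleFibration_iff_doubleTrivFibration
    {C D : DoubleCat.{u}} (F : DoubleFunctor C D) :
    (F.IsDoubleBiequiv ∧ F.IsDoubleFibration) ↔ F.IsDoubleTrivFibration := by
  constructor
  · rintro ⟨⟨db1, db2, db3, db4⟩, df1, df2, df3⟩
    refine ⟨?_, ?_, ?_, db4⟩
    · intro B
      obtain ⟨A, e, he⟩ := db1 B
      obtain ⟨A₀, a, -, hA₀, -⟩ := df1 A B e he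
      exact ⟨A₀, hA₀⟩
    · intro A E b
      obtain ⟨a, σ, hσ⟩ := db2 A E b
      obtain ⟨a₀, α, -, ha₀, -⟩ := df2 A E a b σ hσ
      exact ⟨a₀, ha₀⟩
    · intro B B' v
      obtain ⟨A, A', u, e, e', σ, hσ⟩ := db3 B B' v
      obtain ⟨A₀, A₀', u₀, f, f', α, -, hA₀, hA₀', hv, -, -, -⟩ :=
        df3 A A' u B B' v e e' σ hσ
      exact ⟨A₀, A₀', u₀, hA₀, hA₀', hv⟩
  · rintro ⟨h1, h2, h3, h4⟩
    refine ⟨⟨?_, ?_, ?_, h4⟩, ?_, ?_, ?_⟩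
    · -- db1
      intro B
      obtain ⟨A, rfl⟩ := h1 B
      exact ⟨A, D.hId (F.obj A), isHorEquiv_id _⟩
    · -- db2
      intro A E b
      obtain ⟨a, ha⟩ := h2 A E b
      exact ⟨a, sqCast rfl ha.symm rfl rfl (D.idSqV b),
        vertInv_congr rfl ha.symm
          (sqCast_heq rfl ha.symm rfl rfl _).symm (vertInv_idSqV b)⟩
    · -- db3
      intro B B' v
      obtain ⟨A, A', u, rfl, rfl, hv⟩ := h3 B B' v
      obtain rfl := eq_of_heq hv
      exact ⟨A, A', u, D.hId _, D.hId _, D.idSqH (F.ver u),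
        weaklyHorInv_idSqH _⟩
    · -- df1
      intro E B b hb
      obtain ⟨A, rfl⟩ := h1 B
      obtain ⟨a, rfl⟩ := h2 A E b
      exact ⟨A, a, reflect_horEquiv h2 h4 a hb, rfl, HEq.rfl⟩
    · -- df2
      intro A E c b β hβ
      obtain ⟨a, rfl⟩ := h2 A E b
      obtain ⟨α, hα, -⟩ := h4 A E A E a c (C.vId A) (C.vId E)
        (sqCast rfl rfl (F.ver_id A).symm (F.ver_id E).symm β)
      have hFα : HEq (F.sq α) β := by
        have h0 := sqCast_heq rfl rfl (F.ver_id A).symm (F.ver_id E).symm β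
        rwa [← hα] at h0
      exact ⟨a, α, reflect_vertInv h4 α rfl rfl hFα hβ, rfl, hFα⟩
    · -- df3
      intro E E' u' B B' v e e' β hβ
      obtain ⟨A, A', u, rfl, rfl, hvu⟩ := h3 B B' v
      obtain rfl := eq_of_heq hvu
      obtain ⟨f, rfl⟩ := h2 A E e
      obtain ⟨f', rfl⟩ := h2 A' E' e'
      obtain ⟨α, hα, -⟩ := h4 A E A' E' f f' u u' β
      obtain ⟨a', b', η_a, η_b, ε_a, ε_b, β', hηa, hηb, hεa, hεb, hw1, hw2⟩ := hβ
      obtain ⟨g, rfl⟩ := h2 E A a'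
      obtain ⟨g', rfl⟩ := h2 E' A' b'
      obtain ⟨ηA, hηA, -⟩ := h4 A A A A (C.hId A) (C.hComp f g) (C.vId A)
        (C.vId A) (sqCast (F.hor_id A).symm (F.hor_comp f g).symm
          (F.ver_id A).symm (F.ver_id A).symm η_a)
      obtain ⟨ηB, hηB, -⟩ := h4 A' A' A' A' (C.hId A') (C.hComp f' g')
        (C.vId A') (C.vId A') (sqCast (F.hor_id A').symm
          (F.hor_comp f' g').symm (F.ver_id A').symm (F.ver_id A').symm η_b)
      obtain ⟨εA, hεA, -⟩ := h4 E E E E (C.hComp g f) (C.hId E) (C.vId E)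
        (C.vId E) (sqCast (F.hor_comp g f).symm (F.hor_id E).symm
          (F.ver_id E).symm (F.ver_id E).symm ε_a)
      obtain ⟨εB, hεB, -⟩ := h4 E' E' E' E' (C.hComp g' f') (C.hId E')
        (C.vId E') (C.vId E') (sqCast (F.hor_comp g' f').symm
          (F.hor_id E').symm (F.ver_id E').symm (F.ver_id E').symm ε_b)
      obtain ⟨δ, hδ, -⟩ := h4 E A E' A' g g' u' u β'
      have hFηA : HEq (F.sq ηA) η_a := by
        have h0 := sqCast_heq (F.hor_id A).symm (F.hor_comp f g).symm
          (F.ver_id A).symm (F.ver_id A).symm η_a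
        rwa [← hηA] at h0
      have hFηB : HEq (F.sq ηB) η_b := by
        have h0 := sqCast_heq (F.hor_id A').symm (F.hor_comp f' g').symm
          (F.ver_id A').symm (F.ver_id A').symm η_b
        rwa [← hηB] at h0
      have hFεA : HEq (F.sq εA) ε_a := by
        have h0 := sqCast_heq (F.hor_comp g f).symm (F.hor_id E).symm
          (F.ver_id E).symm (F.ver_id E).symm ε_a
        rwa [← hεA] at h0
      have hFεB : HEq (F.sq εB) ε_b := by
        have h0 := sqCast_heq (F.hor_comp g' f').symm (F.hor_id E').symm
          (F.ver_id E').symm (F.ver_id E').symm ε_b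
        rwa [← hεB] at h0
      refine ⟨A, A', u, f, f', α, ⟨g, g', ηA, ηB, εA, εB, δ,
        reflect_vertInv h4 ηA (F.hor_id A) (F.hor_comp f g) hFηA hηa,
        reflect_vertInv h4 ηB (F.hor_id A') (F.hor_comp f' g') hFηB hηb,
        reflect_vertInv h4 εA (F.hor_comp g f) (F.hor_id E) hFεA hεa,
        reflect_vertInv h4 εB (F.hor_comp g' f') (F.hor_id E') hFεB hεb,
        ?_, ?_⟩, rfl, rfl, HEq.rfl, HEq.rfl, HEq.rfl, heq_of_eq hα⟩
      · -- unit equation upstairs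
        refine faithful_heq h4 rfl rfl
          (by rw [C.vId_comp, C.vComp_id]) (by rw [C.vId_comp, C.vComp_id]) ?_
        have hL : HEq (F.sq (C.compSqV ηA (C.compSqH α δ)))
            (D.compSqV η_a (D.compSqH β β')) :=
          (F.sq_compV ηA (C.compSqH α δ)).trans
            (compSqV_congr (F.hor_id A) (F.hor_comp f g) (F.hor_comp f' g')
              (F.ver_id A) (F.ver_id A) rfl rfl hFηA
              ((F.sq_compH α δ).trans (by rw [hα, hδ])))
        have hR : HEq (F.sq (C.compSqV (C.idSqH u) ηB))
            (D.compSqV (D.idSqH (F.ver u)) η_b) :=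
          (F.sq_compV (C.idSqH u) ηB).trans
            (compSqV_congr (F.hor_id A) (F.hor_id A') (F.hor_comp f' g')
              rfl rfl (F.ver_id A') (F.ver_id A') (F.sq_idH u) hFηB)
        exact ((hL.trans hw1).trans hR.symm)
      · -- counit equation upstairs
        refine faithful_heq h4 rfl rfl
          (by rw [C.vId_comp, C.vComp_id]) (by rw [C.vId_comp, C.vComp_id]) ?_
        have hL : HEq (F.sq (C.compSqV εA (C.idSqH u')))
            (D.compSqV ε_a (D.idSqH (F.ver u'))) :=
          (F.sq_compV εA (C.idSqH u')).trans
            (compSqV_congr (F.hor_comp g f) (F.hor_id E) (F.hor_id E')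
              (F.ver_id E) (F.ver_id E) rfl rfl hFεA (F.sq_idH u'))
        have hR : HEq (F.sq (C.compSqV (C.compSqH δ α) εB))
            (D.compSqV (D.compSqH β' β) ε_b) :=
          (F.sq_compV (C.compSqH δ α) εB).trans
            (compSqV_congr (F.hor_comp g f) (F.hor_comp g' f') (F.hor_id E')
              rfl rfl (F.ver_id E') (F.ver_id E')
              ((F.sq_compH δ α).trans (by rw [hδ, hα])) hFεB)
        exact ((hL.trans hw2).trans hR.symm)

end DoubleCat
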